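/- Chaitin's incompleteness bound: let W be a computably enumerable set of pairs (x, n), where x is a binary string and n ∈ ℕ, such that K(x) > n holds for every pair (x, n) ∈ W (the pairs represent provable true statements 'K(x) > n'). Then there exists a constant c such that n < c for every (x, n) ∈ W. -/

import Mathlib

open Nat.Partrec (Code)
open Nat.Partrec.Code

/-- Plain Kolmogorov complexity of `x` with respect to decompressor `D`. -/
noncomputable def Kc (D : List Bool →. List Bool) (x : List Bool) : ℕ∞ :=
  sInf {n : ℕ∞ | ∃ p : List Bool, x ∈ D p ∧ (p.length : ℕ∞) = n}

/-- `U` is an optimal decompressor. -/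
def OptimalDecompressor (U : List Bool →. List Bool) : Prop :=
  Partrec U ∧ ∀ D : List Bool →. List Bool, Partrec D →
    ∃ c : ℕ, ∀ x : List Bool, Kc U x ≤ Kc D x + (c : ℕ∞)

/-- search function -/
def chaitinG (cW : Code) (m n : ℕ) : Option (List Bool) :=
  (Encodable.decode (α := List Bool × ℕ) n.unpair.2).bind fun q =>
    if (evaln n.unpair.1 cW n.unpair.2).isSome ∧ 2 * m ≤ q.2 then some q.1 else none

theorem chaitinG_computable (cW : Code) : Computable₂ (chaitinG cW) := by
  have h1 : Primrec fun a : ℕ × ℕ => (Encodable.decode (α := List Bool × ℕ) a.2.unpair.2) :=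
    Primrec.decode.comp ((Primrec.snd.comp Primrec.unpair).comp Primrec.snd)
  have h2 : Primrec₂ fun (a : ℕ × ℕ) (q : List Bool × ℕ) =>
      if (evaln a.2.unpair.1 cW a.2.unpair.2).isSome ∧ 2 * a.1 ≤ q.2 then some q.1 else none := by
    apply Primrec.ite
    · apply PrimrecPred.and
      · exact PrimrecPred.comp (p := fun b : Bool => b = true)
          (Primrec.eq.comp Primrec.id (Primrec.const true))
          (Primrec.option_isSome.comp (primrec_evaln.comp
            ((((Primrec.fst.comp Primrec.unpair).comp (Primrec.snd.comp Primrec.fst)).pair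
              (Primrec.const cW)).pair
              ((Primrec.snd.comp Primrec.unpair).comp (Primrec.snd.comp Primrec.fst)))))
      · exact Primrec.nat_le.comp
          (Primrec.nat_mul.comp (Primrec.const 2) (Primrec.fst.comp Primrec.fst))
          (Primrec.snd.comp Primrec.snd)
    · exact Primrec.option_some.comp (Primrec.fst.comp Primrec.snd)
    · exact Primrec.const none
  exact (Primrec.option_bind h1 h2).to_comp.to₂

theorem chaitin_incompleteness
    (U : List Bool →. List Bool) (hU : OptimalDecompressor U)
    (W : Set (List Bool × ℕ)) (hW : REPred (· ∈ W))
    (htrue : ∀ p ∈ W, ((p.2 : ℕ∞)) < Kc U p.1) :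
    ∃ c : ℕ, ∀ p ∈ W, p.2 < c := by
  have hW' : Nat.Partrec fun n => Part.bind (Encodable.decode (α := List Bool × ℕ) n)
      fun q => ((Part.assert (q ∈ W) fun _ => Part.some ()).map Encodable.encode) := hW
  obtain ⟨cW, hcW⟩ := Nat.Partrec.Code.exists_code.1 hW'
  -- Fact B : evaln halts at n, decode n = q, implies q ∈ W
  have factB : ∀ {k n : ℕ} {q : List Bool × ℕ},
      (evaln k cW n).isSome → Encodable.decode (α := List Bool × ℕ) n = some q → q ∈ W := by
    intro k n q hs hd
    obtain ⟨v, hv⟩ := Option.isSome_iff_exists.1 hs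
    have hv' : v ∈ eval cW n := evaln_sound hv
    rw [hcW] at hv'
    obtain ⟨b, hb, hv2⟩ := Part.mem_bind_iff.1 hv'
    have hbq : b = q := by
      rw [hd] at hb
      simpa using hb
    subst hbq
    obtain ⟨u, hu, _⟩ := (Part.mem_map_iff _).1 hv2
    exact (Part.mem_assert_iff.1 hu).1
  -- Fact A : q ∈ W implies evaln halts at encode q for some k
  have factA : ∀ q ∈ W, ∃ k, (evaln k cW (Encodable.encode q)).isSome := by
    intro q hq
    have : Encodable.encode () ∈ eval cW (Encodable.encode q) := by
      rw [hcW]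
      refine Part.mem_bind_iff.2 ⟨q, ?_, ?_⟩
      · simp
      · exact (Part.mem_map_iff _).2 ⟨(), Part.mem_assert_iff.2 ⟨hq, Part.mem_some ()⟩, rfl⟩
    obtain ⟨k, hk⟩ := evaln_complete.1 this
    exact ⟨k, Option.isSome_iff_exists.2 ⟨_, hk⟩⟩
  -- The decompressor
  set D : List Bool →. List Bool := fun p => Nat.rfindOpt (chaitinG cW p.length) with hD_def
  have hD : Partrec D := by
    apply Partrec.rfindOpt
    exact ((chaitinG_computable cW).comp
      (Computable.list_length.comp Computable.fst) Computable.snd).to₂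
  obtain ⟨copt, hcopt⟩ := hU.2 D hD
  by_contra hcon
  push_neg at hcon
  obtain ⟨q, hqW, hq2⟩ := hcon (2 * copt)
  set m := copt with hm
  -- D halts on replicate m false
  obtain ⟨k, hk⟩ := factA q hqW
  have hgsome : chaitinG cW m (Nat.pair k (Encodable.encode q)) = some q.1 := by
    simp only [chaitinG, Nat.unpair_pair, Encodable.encodek, Option.bind_some]
    rw [if_pos ⟨hk, hq2⟩]
  have hdom : (Nat.rfindOpt (chaitinG cW m)).Dom :=
    Nat.rfindOpt_dom.2 ⟨_, _, hgsome⟩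
  set a := (Nat.rfindOpt (chaitinG cW m)).get hdom with ha
  have hamem : a ∈ Nat.rfindOpt (chaitinG cW m) := Part.get_mem hdom
  obtain ⟨n, hn⟩ := Nat.rfindOpt_spec hamem
  -- unpack hn : a ∈ chaitinG cW m n
  have hn' : chaitinG cW m n = some a := hn
  obtain ⟨q', hq'd, hq'if⟩ := Option.bind_eq_some_iff.1 hn'
  have hcond : (evaln n.unpair.1 cW n.unpair.2).isSome ∧ 2 * m ≤ q'.2 := by
    by_contra hc
    rw [if_neg hc] at hq'if
    exact nomatch hq'if
  rw [if_pos hcond] at hq'if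
  have haq : a = q'.1 := (Option.some.inj hq'if).symm
  have hq'W : q' ∈ W := factB hcond.1 hq'd
  -- Kc bounds
  have hDa : a ∈ D (List.replicate m false) := by
    rw [hD_def]
    simpa using hamem
  have hKD : Kc D a ≤ (m : ℕ∞) := by
    apply sInf_le
    exact ⟨List.replicate m false, hDa, by simp⟩
  have hKU : Kc U a ≤ ((m + copt : ℕ) : ℕ∞) := by
    calc Kc U a ≤ Kc D a + (copt : ℕ∞) := hcopt a
    _ ≤ (m : ℕ∞) + (copt : ℕ∞) := add_le_add_left hKD _
    _ = ((m + copt : ℕ) : ℕ∞) := by push_cast; ring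
  have hlt : ((q'.2 : ℕ∞)) < ((m + copt : ℕ) : ℕ∞) := lt_of_lt_of_le (haq ▸ htrue q' hq'W) hKU
  have hlt' : q'.2 < m + copt := Nat.cast_lt.1 hlt
  have := hcond.2
  omega
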